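/- Fix δ > 0 and a sequence of C¹ maps f_k : I₀ → I₀ with sup_k #𝒞_k = p < ∞. For binary words (a_1,…,a_s) define C_δ(a_1,…,a_s) = {x ∈ I₀ : r_i(x) ≥ δ if a_i = 1, and 0 < r_i(x) < δ if a_i = 0}. Then for any word (a_1,…,a_s): the number of connected components of C_δ(a_1,…,a_s,0) plus the number of connected components of C_δ(a_1,…,a_s,1) is at most 3(p+1) times the number of connected components of C_δ(a_1,…,a_s). -/

import Mathlib

open Set

noncomputable section

/-- `comp f n = f_{n-1} ∘ ⋯ ∘ f_0`, with `comp f 0 = id`. -/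
def comp (f : ℕ → ℝ → ℝ) : ℕ → ℝ → ℝ
  | 0 => id
  | (n + 1) => f n ∘ comp f n

/-- The critical set `𝒞_k` of `f_k` inside the interval `I`. -/
def crit (f : ℕ → ℝ → ℝ) (I : Set ℝ) (k : ℕ) : Set ℝ :=
  {x ∈ I | deriv (f k) x = 0}

/-- `T f I i x`: the maximal (pre)interval in `I` containing `x` such that
`f^j` of it avoids `𝒞_j` for all `j < i`. -/
def T (f : ℕ → ℝ → ℝ) (I : Set ℝ) (i : ℕ) (x : ℝ) : Set ℝ :=
  ⋃₀ {S | S ⊆ I ∧ IsPreconnected S ∧ x ∈ S ∧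
      ∀ j < i, ∀ y ∈ S, comp f j y ∉ crit f I j}

/-- `r f I i x`: the minimum of the lengths of the images under `f^i` of the
two connected components of `T f I i x \ {x}`. -/
def r (f : ℕ → ℝ → ℝ) (I : Set ℝ) (i : ℕ) (x : ℝ) : ℝ :=
  min (Metric.diam (comp f i '' (T f I i x ∩ Iio x)))
      (Metric.diam (comp f i '' (T f I i x ∩ Ioi x)))

/-- The set `C_δ(a_1,…,a_s)` attached to a binary word `w` (here `true = 1`, `false = 0`):
`r_i(x) ≥ δ` at positions with symbol `1`, and `0 < r_i(x) < δ` at positions with symbol `0`. -/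
def Cword (f : ℕ → ℝ → ℝ) (I : Set ℝ) (δ : ℝ) (w : List Bool) : Set ℝ :=
  {x ∈ I | ∀ i < w.length,
    (w.getD i false = true → δ ≤ r f I (i + 1) x) ∧
    (w.getD i false = false → 0 < r f I (i + 1) x ∧ r f I (i + 1) x < δ)}

/-- The number of connected components of a subset of `ℝ`. -/
def compCount (S : Set ℝ) : ℕ :=
  Set.ncard {K : Set ℝ | ∃ y ∈ S, K = connectedComponentIn S y}

/-! ### Auxiliary development -/

section Aux

variable (f : ℕ → ℝ → ℝ) (I : Set ℝ)

/-- The pointwise condition: the orbit of `y` avoids the critical sets up to time `i`. -/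
def okpt (i : ℕ) (y : ℝ) : Prop := ∀ j < i, comp f j y ∉ crit f I j

variable {f I}

lemma T_subset_I {i : ℕ} {x : ℝ} : T f I i x ⊆ I :=
  sUnion_subset fun _ hS => hS.1

lemma isPreconnected_T {i : ℕ} {x : ℝ} : IsPreconnected (T f I i x) :=
  isPreconnected_sUnion x _ (fun _ hS => hS.2.2.1) (fun _ hS => hS.2.1)

lemma okpt_of_mem_T {i : ℕ} {x y : ℝ} (hy : y ∈ T f I i x) : okpt f I i y := by
  obtain ⟨S, hS, hyS⟩ := hy
  exact fun j hj => hS.2.2.2 j hj y hyS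

lemma subset_T {i : ℕ} {x : ℝ} {S : Set ℝ} (hSI : S ⊆ I) (hpc : IsPreconnected S)
    (hx : x ∈ S) (hok : ∀ z ∈ S, okpt f I i z) : S ⊆ T f I i x :=
  subset_sUnion_of_mem ⟨hSI, hpc, hx, fun j hj z hz => hok z hz j hj⟩

lemma T_subset_T {i : ℕ} {x y : ℝ} {S : Set ℝ} (hSI : S ⊆ I) (hpc : IsPreconnected S)
    (hok : ∀ z ∈ S, okpt f I i z) (hx : x ∈ S) (hy : y ∈ S) :
    T f I i x ⊆ T f I i y := by
  have hSx : S ⊆ T f I i x := subset_T hSI hpc hx hok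
  refine subset_sUnion_of_mem ⟨T_subset_I, isPreconnected_T, hSx hy, ?_⟩
  exact fun j hj z hz => okpt_of_mem_T hz j hj

lemma T_eq {i : ℕ} {x y : ℝ} {S : Set ℝ} (hSI : S ⊆ I) (hpc : IsPreconnected S)
    (hok : ∀ z ∈ S, okpt f I i z) (hx : x ∈ S) (hy : y ∈ S) :
    T f I i x = T f I i y :=
  subset_antisymm (T_subset_T hSI hpc hok hx hy) (T_subset_T hSI hpc hok hy hx)

lemma T_eq_empty {i : ℕ} {x : ℝ} (h : ¬ okpt f I i x) : T f I i x = ∅ := by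
  unfold okpt at h
  push_neg at h
  obtain ⟨j, hj, hcrit⟩ := h
  ext y
  simp only [mem_empty_iff_false, iff_false]
  rintro ⟨S, hS, -⟩
  exact hS.2.2.2 j hj x hS.2.2.1 hcrit

lemma okpt_of_r_pos {i : ℕ} {x : ℝ} (h : 0 < r f I i x) : okpt f I i x := by
  by_contra hok
  rw [r, T_eq_empty hok] at h
  simp at h

lemma Cword_subset_I {δ : ℝ} {w : List Bool} : Cword f I δ w ⊆ I := fun _ hx => hx.1

lemma mem_Cword_append {δ : ℝ} {w : List Bool} {c : Bool} {x : ℝ} :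
    x ∈ Cword f I δ (w ++ [c]) ↔ x ∈ Cword f I δ w ∧
      (c = true → δ ≤ r f I (w.length + 1) x) ∧
      (c = false → 0 < r f I (w.length + 1) x ∧ r f I (w.length + 1) x < δ) := by
  constructor
  · intro hx
    have hlen : (w ++ [c]).length = w.length + 1 := by simp
    refine ⟨⟨hx.1, fun i hi => ?_⟩, ?_⟩
    · have := hx.2 i (by omega)
      rwa [List.getD_append _ _ _ _ hi] at this
    · have := hx.2 w.length (by omega)
      rwa [List.getD_append_right _ _ _ _ le_rfl, Nat.sub_self, List.getD_cons_zero] at this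
  · rintro ⟨hxw, hc⟩
    refine ⟨hxw.1, fun i hi => ?_⟩
    rcases lt_or_ge i w.length with h | h
    · rw [List.getD_append _ _ _ _ h]
      exact hxw.2 i h
    · have hi' : i = w.length := by
        have : i < w.length + 1 := by simpa using hi
        omega
      subst hi'
      rw [List.getD_append_right _ _ _ _ le_rfl, Nat.sub_self, List.getD_cons_zero]
      exact hc

lemma Cword_append_subset {δ : ℝ} {w : List Bool} {c : Bool} :
    Cword f I δ (w ++ [c]) ⊆ Cword f I δ w := fun _ hx => (mem_Cword_append.mp hx).1

lemma okpt_of_mem_Cword {δ : ℝ} (hδ : 0 < δ) {w : List Bool} {x : ℝ}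
    (hx : x ∈ Cword f I δ w) : okpt f I w.length x := by
  intro j hj
  have hr : 0 < r f I (j + 1) x := by
    rcases hw : w.getD j false with _ | _
    · exact ((hx.2 j hj).2 hw).1
    · exact lt_of_lt_of_le hδ ((hx.2 j hj).1 hw)
  exact okpt_of_r_pos hr j (Nat.lt_succ_self j)

lemma r_pos_of_mem_Cword_append {δ : ℝ} (hδ : 0 < δ) {w : List Bool} {c : Bool} {x : ℝ}
    (hx : x ∈ Cword f I δ (w ++ [c])) : 0 < r f I (w.length + 1) x := by
  rcases (mem_Cword_append.mp hx) with ⟨-, h1, h0⟩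
  cases c
  · exact (h0 rfl).1
  · exact lt_of_lt_of_le hδ (h1 rfl)

end Aux

/-! ### Calculus lemmas -/

section Calc

variable {a b : ℝ} {f : ℕ → ℝ → ℝ}

lemma contDiff_comp (hC1 : ∀ k, ContDiff ℝ 1 (f k)) (n : ℕ) : ContDiff ℝ 1 (comp f n) := by
  induction n with
  | zero => exact contDiff_id
  | succ n ih => exact (hC1 n).comp ih

lemma mapsTo_comp (hmaps : ∀ k, MapsTo (f k) (Icc a b) (Icc a b)) (n : ℕ) :
    MapsTo (comp f n) (Icc a b) (Icc a b) := by
  induction n with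
  | zero => exact fun x hx => hx
  | succ n ih => exact (hmaps n).comp ih

lemma deriv_comp_ne_zero (hC1 : ∀ k, ContDiff ℝ 1 (f k))
    (hmaps : ∀ k, MapsTo (f k) (Icc a b) (Icc a b)) (n : ℕ) {x : ℝ}
    (hx : x ∈ Icc a b) (hok : okpt f (Icc a b) n x) : deriv (comp f n) x ≠ 0 := by
  induction n with
  | zero => simp [comp]
  | succ n ih =>
    have hgd : DifferentiableAt ℝ (comp f n) x :=
      ((contDiff_comp hC1 n).differentiable one_ne_zero).differentiableAt
    have hfd : DifferentiableAt ℝ (f n) (comp f n x) :=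
      ((hC1 n).differentiable one_ne_zero).differentiableAt
    have hchain : deriv (comp f (n + 1)) x = deriv (f n) (comp f n x) * deriv (comp f n) x := by
      show deriv (f n ∘ comp f n) x = _
      exact deriv_comp x hfd hgd
    rw [hchain]
    have hy : comp f n x ∈ Icc a b := mapsTo_comp hmaps n hx
    have hnc : comp f n x ∉ crit f (Icc a b) n := hok n (Nat.lt_succ_self n)
    have h1 : deriv (f n) (comp f n x) ≠ 0 := by
      intro h0
      exact hnc ⟨hy, h0⟩
    exact mul_ne_zero h1 (ih (fun j hj => hok j (Nat.lt_succ_of_lt hj)))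

lemma injOn_comp (hC1 : ∀ k, ContDiff ℝ 1 (f k))
    (hmaps : ∀ k, MapsTo (f k) (Icc a b) (Icc a b)) (n : ℕ) {J : Set ℝ}
    (hJc : Convex ℝ J) (hJI : J ⊆ Icc a b) (hok : ∀ x ∈ J, okpt f (Icc a b) n x) :
    InjOn (comp f n) J := by
  set g := comp f n with hg
  have hd : ∀ x ∈ J, deriv g x ≠ 0 := fun x hx =>
    deriv_comp_ne_zero hC1 hmaps n (hJI hx) (hok x hx)
  have hgc : ContDiff ℝ 1 g := contDiff_comp hC1 n
  have hdc : Continuous (deriv g) := hgc.continuous_deriv le_rfl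
  by_cases hpos : ∀ x ∈ J, 0 < deriv g x
  · exact (strictMonoOn_of_deriv_pos hJc hgc.continuous.continuousOn
      (fun x hx => hpos x (interior_subset hx))).injOn
  · push_neg at hpos
    obtain ⟨u, huJ, hu⟩ := hpos
    have hu' : deriv g u < 0 := lt_of_le_of_ne hu (hd u huJ)
    have hneg : ∀ x ∈ J, deriv g x < 0 := by
      intro v hv
      by_contra hv0
      push_neg at hv0
      have hv' : 0 < deriv g v := lt_of_le_of_ne hv0 (Ne.symm (hd v hv))
      have h0 : (0 : ℝ) ∈ uIcc (deriv g u) (deriv g v) := by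
        rw [Set.mem_uIcc]
        exact Or.inl ⟨hu'.le, hv'.le⟩
      obtain ⟨z, hz, hz0⟩ := intermediate_value_uIcc hdc.continuousOn h0
      have hzJ : z ∈ J := hJc.ordConnected.uIcc_subset huJ hv hz
      exact hd z hzJ hz0
    exact (strictAntiOn_of_deriv_neg hJc hgc.continuous.continuousOn
      (fun x hx => hneg x (interior_subset hx))).injOn

lemma diam_img_mono (hC1 : ∀ k, ContDiff ℝ 1 (f k)) (n : ℕ) {S₁ S₂ : Set ℝ}
    (h12 : S₁ ⊆ S₂) (h2 : S₂ ⊆ Icc a b) :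
    Metric.diam (comp f n '' S₁) ≤ Metric.diam (comp f n '' S₂) := by
  apply Metric.diam_mono (image_mono h12)
  have hbd : Bornology.IsBounded (comp f n '' Icc a b) :=
    (isCompact_Icc.image (contDiff_comp hC1 n).continuous).isBounded
  exact hbd.subset (image_mono h2)

end Calc

/-! ### Covers machinery -/

/-- `Covers n S` : `S` can be written as the union of at most `n` preconnected sets. -/
def Covers (n : ℕ) (S : Set ℝ) : Prop :=
  ∃ 𝒜 : Finset (Set ℝ), 𝒜.card ≤ n ∧ (∀ A ∈ 𝒜, IsPreconnected A) ∧ S = ⋃₀ ↑𝒜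

lemma covers_of_isPreconnected {S : Set ℝ} (h : IsPreconnected S) : Covers 1 S := by
  classical
  exact ⟨{S}, by simp, by simpa using h, by simp⟩

lemma covers_mono {m n : ℕ} {S : Set ℝ} (h : Covers m S) (hmn : m ≤ n) : Covers n S := by
  obtain ⟨𝒜, h1, h2, h3⟩ := h
  exact ⟨𝒜, h1.trans hmn, h2, h3⟩

lemma covers_union {m n : ℕ} {S S' : Set ℝ} (h : Covers m S) (h' : Covers n S') :
    Covers (m + n) (S ∪ S') := by
  classical
  obtain ⟨𝒜, h1, h2, h3⟩ := h
  obtain ⟨ℬ, h1', h2', h3'⟩ := h'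
  refine ⟨𝒜 ∪ ℬ, ?_, ?_, ?_⟩
  · exact (Finset.card_union_le _ _).trans (Nat.add_le_add h1 h1')
  · intro A hA
    rcases Finset.mem_union.mp hA with h | h
    · exact h2 A h
    · exact h2' A h
  · rw [Finset.coe_union, sUnion_union, ← h3, ← h3']

lemma covers_pair {S S₁ S₂ : Set ℝ} (h1 : IsPreconnected S₁) (h2 : IsPreconnected S₂)
    (hS : S = S₁ ∪ S₂) : Covers 2 S := by
  rw [hS]
  exact covers_union (covers_of_isPreconnected h1) (covers_of_isPreconnected h2)

lemma covers_compCount {n : ℕ} {S : Set ℝ} (h : Covers n S) :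
    {K : Set ℝ | ∃ y ∈ S, K = connectedComponentIn S y}.Finite ∧ compCount S ≤ n := by
  classical
  obtain ⟨𝒜, hcard, hpc, hU⟩ := h
  set φ : Set ℝ → Set ℝ := fun A =>
    if h : A.Nonempty then connectedComponentIn S h.some else ∅ with hφ
  have hsub : {K : Set ℝ | ∃ y ∈ S, K = connectedComponentIn S y} ⊆ φ '' ↑𝒜 := by
    rintro K ⟨y, hy, rfl⟩
    have hy' : y ∈ ⋃₀ (↑𝒜 : Set (Set ℝ)) := hU ▸ hy
    obtain ⟨A, hA𝒜, hyA⟩ := hy'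
    have hAne : A.Nonempty := ⟨y, hyA⟩
    have hAS : A ⊆ S := hU ▸ subset_sUnion_of_mem hA𝒜
    have hsubA : A ⊆ connectedComponentIn S y :=
      (hpc A hA𝒜).subset_connectedComponentIn hyA hAS
    refine ⟨A, hA𝒜, ?_⟩
    rw [hφ]
    simp only [hAne, dif_pos]
    exact (connectedComponentIn_eq (hsubA hAne.some_mem)).symm
  have hfin : (φ '' ↑𝒜).Finite := (𝒜.finite_toSet).image φ
  refine ⟨hfin.subset hsub, ?_⟩
  calc compCount S ≤ (φ '' ↑𝒜).ncard := Set.ncard_le_ncard hsub hfin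
    _ ≤ (↑𝒜 : Set (Set ℝ)).ncard := Set.ncard_image_le 𝒜.finite_toSet
    _ = 𝒜.card := Set.ncard_coe_finset 𝒜
    _ ≤ n := hcard

lemma covers_biUnion {n : ℕ} (𝒜 : Finset (Set ℝ)) (g : Set ℝ → Set ℝ)
    (h : ∀ A ∈ 𝒜, Covers n (g A)) : Covers (𝒜.card * n) (⋃ A ∈ 𝒜, g A) := by
  classical
  induction 𝒜 using Finset.induction_on with
  | empty => exact ⟨∅, by simp, by simp, by simp⟩
  | @insert A 𝒜' hnotmem ih =>
    rw [Finset.card_insert_of_notMem hnotmem]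
    have : (⋃ B ∈ insert A 𝒜', g B) = g A ∪ ⋃ B ∈ 𝒜', g B := by
      simp [Set.biUnion_insert]
    rw [this, add_mul, one_mul, add_comm (𝒜'.card * n) n]
    exact covers_union (h A (Finset.mem_insert_self A 𝒜'))
      (ih fun B hB => h B (Finset.mem_insert_of_mem hB))

/-- A convex set minus a finite set of at most `n` points is covered by `n+1` convex sets. -/
lemma convex_diff_finite :
    ∀ n : ℕ, ∀ J E : Set ℝ, Convex ℝ J → E.Finite → E.ncard ≤ n →
      ∃ 𝒜 : Finset (Set ℝ), 𝒜.card ≤ n + 1 ∧ (∀ A ∈ 𝒜, Convex ℝ A) ∧ J \ E = ⋃₀ ↑𝒜 := by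
  classical
  intro n
  induction n with
  | zero =>
    intro J E hJ hE hcard
    have hE0 : E = ∅ := by
      rw [← Set.ncard_eq_zero hE]
      omega
    exact ⟨{J}, by simp, by simpa using hJ, by simp [hE0]⟩
  | succ n ih =>
    intro J E hJ hE hcard
    rcases E.eq_empty_or_nonempty with hE0 | hEne
    · exact ⟨{J}, by simp, by simpa using hJ, by simp [hE0]⟩
    · obtain ⟨e, heE, hmax⟩ := Set.exists_max_image E id hE hEne
      set E' := E \ {e} with hE'
      have hE'fin : E'.Finite := hE.diff
      have hE'card : E'.ncard ≤ n := by
        have := Set.ncard_diff_singleton_of_mem heE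
        rw [← hE'] at this
        omega
      obtain ⟨𝒜₁, hc1, hconv1, hU1⟩ := ih (J ∩ Iio e) E' (hJ.inter (convex_Iio e)) hE'fin hE'card
      refine ⟨insert (J ∩ Ioi e) 𝒜₁, ?_, ?_, ?_⟩
      · exact (Finset.card_insert_le _ _).trans (by omega)
      · intro A hA
        rcases Finset.mem_insert.mp hA with h | h
        · rw [h]; exact hJ.inter (convex_Ioi e)
        · exact hconv1 A h
      · rw [Finset.coe_insert, sUnion_insert, ← hU1]
        ext z
        simp only [mem_diff, mem_union, mem_inter_iff, mem_Ioi, mem_Iio]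
        constructor
        · rintro ⟨hzJ, hzE⟩
          rcases lt_trichotomy z e with h | h | h
          · exact Or.inr ⟨⟨hzJ, h⟩, fun hz' => hzE hz'.1⟩
          · exact absurd (h ▸ heE) hzE
          · exact Or.inl ⟨hzJ, h⟩
        · rintro (⟨hzJ, hz⟩ | ⟨⟨hzJ, hz⟩, hzE'⟩)
          · refine ⟨hzJ, fun hzE => ?_⟩
            exact absurd (hmax z hzE) (not_le.mpr hz)
          · refine ⟨hzJ, fun hzE => ?_⟩
            exact hzE' ⟨hzE, fun h => (h ▸ hz).false⟩


/-! ### The main splitting argument -/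

section Main

variable {a b : ℝ} {f : ℕ → ℝ → ℝ} {p : ℕ} {δ : ℝ}

/-- On a preconnected piece avoiding all critical orbits up to time `s`, the set of points
whose extended word ends in `1` is preconnected. -/
lemma piece_true (hC1 : ∀ k, ContDiff ℝ 1 (f k)) (w : List Bool) {A : Set ℝ}
    (hA : IsPreconnected A) (hAC : A ⊆ Cword f (Icc a b) δ w)
    (hok : ∀ z ∈ A, okpt f (Icc a b) (w.length + 1) z) :
    IsPreconnected (Cword f (Icc a b) δ (w ++ [true]) ∩ A) := by
  set s := w.length with hs
  rw [isPreconnected_iff_ordConnected]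
  constructor
  intro x hx y hy z hz
  have hzA : z ∈ A := (isPreconnected_iff_ordConnected.mp hA).out hx.2 hy.2 hz
  have hAI : A ⊆ Icc a b := hAC.trans Cword_subset_I
  have hTxz : T f (Icc a b) (s+1) x = T f (Icc a b) (s+1) z := T_eq hAI hA hok hx.2 hzA
  have hTyz : T f (Icc a b) (s+1) y = T f (Icc a b) (s+1) z := T_eq hAI hA hok hy.2 hzA
  obtain ⟨hxw, hx1, -⟩ := mem_Cword_append.mp hx.1
  obtain ⟨hyw, hy1, -⟩ := mem_Cword_append.mp hy.1
  have hrx := hx1 rfl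
  have hry := hy1 rfl
  rw [r] at hrx hry
  have hd1x : δ ≤ Metric.diam (comp f (s+1) '' (T f (Icc a b) (s+1) z ∩ Iio x)) := by
    rw [← hTxz]; exact (le_min_iff.mp hrx).1
  have hd2y : δ ≤ Metric.diam (comp f (s+1) '' (T f (Icc a b) (s+1) z ∩ Ioi y)) := by
    rw [← hTyz]; exact (le_min_iff.mp hry).2
  have hTsub : T f (Icc a b) (s+1) z ⊆ Icc a b := T_subset_I
  have hrz : δ ≤ r f (Icc a b) (s+1) z := by
    rw [r]
    refine le_min (le_trans hd1x ?_) (le_trans hd2y ?_)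
    · exact diam_img_mono hC1 (s+1)
        (inter_subset_inter_right _ (Iio_subset_Iio hz.1))
        ((inter_subset_left).trans hTsub)
    · exact diam_img_mono hC1 (s+1)
        (inter_subset_inter_right _ (Ioi_subset_Ioi hz.2))
        ((inter_subset_left).trans hTsub)
  exact ⟨mem_Cword_append.mpr ⟨hAC hzA, fun _ => hrz, fun h => Bool.noConfusion h⟩, hzA⟩

/-- On a preconnected piece avoiding all critical orbits up to time `s`, the set of points
whose extended word ends in `0` is covered by two preconnected sets. -/
lemma piece_false (hC1 : ∀ k, ContDiff ℝ 1 (f k)) (hδ : 0 < δ) (w : List Bool) {A : Set ℝ}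
    (hA : IsPreconnected A) (hAC : A ⊆ Cword f (Icc a b) δ w)
    (hok : ∀ z ∈ A, okpt f (Icc a b) (w.length + 1) z) :
    Covers 2 (Cword f (Icc a b) δ (w ++ [false]) ∩ A) := by
  set s := w.length with hs
  have hAI : A ⊆ Icc a b := hAC.trans Cword_subset_I
  set C := Cword f (Icc a b) δ (w ++ [false]) ∩ A with hC
  set d1 : ℝ → ℝ := fun z => Metric.diam (comp f (s+1) '' (T f (Icc a b) (s+1) z ∩ Iio z))
    with hd1
  set d2 : ℝ → ℝ := fun z => Metric.diam (comp f (s+1) '' (T f (Icc a b) (s+1) z ∩ Ioi z))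
    with hd2
  have hrdef : ∀ z, r f (Icc a b) (s+1) z = min (d1 z) (d2 z) := fun z => rfl
  set A1 := {z ∈ C | d1 z < δ} with hA1
  set A2 := {z ∈ C | d2 z < δ} with hA2
  have hTsub : ∀ z : ℝ, T f (Icc a b) (s+1) z ⊆ Icc a b := fun _ => T_subset_I
  -- monotonicity facts used below
  have hmono1 : ∀ {u v : ℝ}, u ∈ A → v ∈ A → u ≤ v → d1 u ≤ d1 v := by
    intro u v hu hv huv
    have hT : T f (Icc a b) (s+1) u = T f (Icc a b) (s+1) v := T_eq hAI hA hok hu hv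
    rw [hd1]
    simp only
    rw [hT]
    exact diam_img_mono hC1 (s+1)
      (inter_subset_inter_right _ (Iio_subset_Iio huv)) ((inter_subset_left).trans (hTsub v))
  have hmono2 : ∀ {u v : ℝ}, u ∈ A → v ∈ A → u ≤ v → d2 v ≤ d2 u := by
    intro u v hu hv huv
    have hT : T f (Icc a b) (s+1) v = T f (Icc a b) (s+1) u := T_eq hAI hA hok hv hu
    rw [hd2]
    simp only
    rw [hT]
    exact diam_img_mono hC1 (s+1)
      (inter_subset_inter_right _ (Ioi_subset_Ioi huv)) ((inter_subset_left).trans (hTsub u))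
  have hmemC : ∀ {z : ℝ}, z ∈ C → 0 < d1 z ∧ 0 < d2 z ∧ min (d1 z) (d2 z) < δ := by
    intro z hz
    have h := ((mem_Cword_append.mp hz.1).2.2 rfl)
    rw [hrdef] at h
    exact ⟨lt_min_iff.mp h.1 |>.1, lt_min_iff.mp h.1 |>.2, h.2⟩
  have hOC : ∀ (B : Set ℝ), B = A1 ∨ B = A2 → IsPreconnected B := by
    rintro B (rfl | rfl) <;>
    · rw [isPreconnected_iff_ordConnected]
      constructor
      intro x hx y hy z hz
      have hxA : x ∈ A := hx.1.2
      have hyA : y ∈ A := hy.1.2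
      have hzA : z ∈ A := (isPreconnected_iff_ordConnected.mp hA).out hxA hyA hz
      obtain ⟨hp1x, hp2x, -⟩ := hmemC hx.1
      obtain ⟨hp1y, hp2y, -⟩ := hmemC hy.1
      have h1z : 0 < d1 z := lt_of_lt_of_le hp1x (hmono1 hxA hzA hz.1)
      have h2z : 0 < d2 z := lt_of_lt_of_le hp2y (hmono2 hzA hyA hz.2)
      first
      | -- A1 case : d1 y < δ, use monotone increasing d1
        (have hlt : d1 z < δ := lt_of_le_of_lt (hmono1 hzA hyA hz.2) hy.2
         have hrz : 0 < r f (Icc a b) (s+1) z ∧ r f (Icc a b) (s+1) z < δ := by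
           rw [hrdef]
           exact ⟨lt_min h1z h2z, lt_of_le_of_lt (min_le_left _ _) hlt⟩
         exact ⟨⟨mem_Cword_append.mpr ⟨hAC hzA, fun h => Bool.noConfusion h, fun _ => hrz⟩,
           hzA⟩, hlt⟩)
      | -- A2 case : d2 x < δ, use monotone decreasing d2
        (have hlt : d2 z < δ := lt_of_le_of_lt (hmono2 hxA hzA hz.1) hx.2
         have hrz : 0 < r f (Icc a b) (s+1) z ∧ r f (Icc a b) (s+1) z < δ := by
           rw [hrdef]
           exact ⟨lt_min h1z h2z, lt_of_le_of_lt (min_le_right _ _) hlt⟩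
         exact ⟨⟨mem_Cword_append.mpr ⟨hAC hzA, fun h => Bool.noConfusion h, fun _ => hrz⟩,
           hzA⟩, hlt⟩)
  refine covers_pair (hOC A1 (Or.inl rfl)) (hOC A2 (Or.inr rfl)) ?_
  ext z
  constructor
  · intro hz
    obtain ⟨-, -, hmin⟩ := hmemC hz
    rcases min_lt_iff.mp hmin with h | h
    · exact Or.inl ⟨hz, h⟩
    · exact Or.inr ⟨hz, h⟩
  · rintro (hz | hz) <;> exact hz.1

/-- Per connected component of `Cword w`: the part of the `1`-extension is covered by `p+1`
preconnected sets and the part of the `0`-extension by `2(p+1)`. -/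
lemma component_covers (hC1 : ∀ k, ContDiff ℝ 1 (f k))
    (hmaps : ∀ k, MapsTo (f k) (Icc a b) (Icc a b))
    (hcrit : ∀ k, (crit f (Icc a b) k).Finite ∧ (crit f (Icc a b) k).ncard ≤ p)
    (hδ : 0 < δ) (w : List Bool) {K : Set ℝ}
    (hK : IsPreconnected K) (hKC : K ⊆ Cword f (Icc a b) δ w) :
    Covers (p + 1) (Cword f (Icc a b) δ (w ++ [true]) ∩ K) ∧
      Covers (2 * (p + 1)) (Cword f (Icc a b) δ (w ++ [false]) ∩ K) := by
  classical
  set s := w.length with hs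
  have hKI : K ⊆ Icc a b := hKC.trans Cword_subset_I
  have hokK : ∀ x ∈ K, okpt f (Icc a b) s x := fun x hx => okpt_of_mem_Cword hδ (hKC hx)
  have hKconv : Convex ℝ K := hK.convex
  have hinj : InjOn (comp f s) K := injOn_comp hC1 hmaps s hKconv hKI hokK
  set E := {x ∈ K | comp f s x ∈ crit f (Icc a b) s} with hE
  have hEK : E ⊆ K := fun x hx => hx.1
  have himg : comp f s '' E ⊆ crit f (Icc a b) s := by rintro _ ⟨x, hx, rfl⟩; exact hx.2
  have hEfin : E.Finite :=
    Set.Finite.of_finite_image (((hcrit s).1).subset himg) (hinj.mono hEK)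
  have hEcard : E.ncard ≤ p := by
    calc E.ncard = (comp f s '' E).ncard := (Set.ncard_image_of_injOn (hinj.mono hEK)).symm
      _ ≤ (crit f (Icc a b) s).ncard := Set.ncard_le_ncard himg (hcrit s).1
      _ ≤ p := (hcrit s).2
  obtain ⟨𝒜, hcard, hconv, hU⟩ := convex_diff_finite p K E hKconv hEfin hEcard
  have hpiece : ∀ A ∈ 𝒜, IsPreconnected A ∧ A ⊆ Cword f (Icc a b) δ w ∧
      ∀ z ∈ A, okpt f (Icc a b) (s + 1) z := by
    intro A hA𝒜
    have hAsub : A ⊆ K \ E := hU ▸ subset_sUnion_of_mem hA𝒜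
    refine ⟨(hconv A hA𝒜).isPreconnected, fun z hz => hKC (hAsub hz).1, ?_⟩
    intro z hz j hj
    rcases Nat.lt_or_ge j s with h | h
    · exact hokK z (hAsub hz).1 j h
    · have hjs : j = s := by omega
      subst hjs
      exact fun hc => (hAsub hz).2 ⟨(hAsub hz).1, hc⟩
  have hdecomp : ∀ c : Bool, Cword f (Icc a b) δ (w ++ [c]) ∩ K =
      ⋃ A ∈ 𝒜, (Cword f (Icc a b) δ (w ++ [c]) ∩ A) := by
    intro c
    ext z
    simp only [mem_iUnion, mem_inter_iff, exists_prop]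
    constructor
    · rintro ⟨hzc, hzK⟩
      have hzE : z ∉ E := by
        intro hzE
        exact okpt_of_r_pos (r_pos_of_mem_Cword_append hδ hzc) s (Nat.lt_succ_self s) hzE.2
      have hmem : z ∈ K \ E := ⟨hzK, hzE⟩
      rw [hU] at hmem
      obtain ⟨A, hA, hzA⟩ := hmem
      exact ⟨A, hA, hzc, hzA⟩
    · rintro ⟨A, hA, hzc, hzA⟩
      have hAsub : A ⊆ K \ E := hU ▸ subset_sUnion_of_mem hA
      exact ⟨hzc, (hAsub hzA).1⟩
  constructor
  · have h1 := covers_biUnion (n := 1) 𝒜 (fun A => Cword f (Icc a b) δ (w ++ [true]) ∩ A)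
      (fun A hA => covers_of_isPreconnected
        (piece_true hC1 w (hpiece A hA).1 (hpiece A hA).2.1 (hpiece A hA).2.2))
    rw [← hdecomp true] at h1
    exact covers_mono h1 (by omega)
  · have h2 := covers_biUnion (n := 2) 𝒜 (fun A => Cword f (Icc a b) δ (w ++ [false]) ∩ A)
      (fun A hA => piece_false hC1 hδ w (hpiece A hA).1 (hpiece A hA).2.1 (hpiece A hA).2.2)
    rw [← hdecomp false] at h2
    exact covers_mono h2 (by omega)

/-- The global step: if the set of components of `Cword w` is finite, both extensions
are covered by controlled numbers of preconnected sets. -/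
lemma step_covers (hC1 : ∀ k, ContDiff ℝ 1 (f k))
    (hmaps : ∀ k, MapsTo (f k) (Icc a b) (Icc a b))
    (hcrit : ∀ k, (crit f (Icc a b) k).Finite ∧ (crit f (Icc a b) k).ncard ≤ p)
    (hδ : 0 < δ) (w : List Bool)
    (hfin : {K : Set ℝ | ∃ y ∈ Cword f (Icc a b) δ w,
      K = connectedComponentIn (Cword f (Icc a b) δ w) y}.Finite) :
    Covers ((p + 1) * compCount (Cword f (Icc a b) δ w))
        (Cword f (Icc a b) δ (w ++ [true])) ∧
      Covers (2 * (p + 1) * compCount (Cword f (Icc a b) δ w))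
        (Cword f (Icc a b) δ (w ++ [false])) := by
  classical
  set W := Cword f (Icc a b) δ w with hW
  set Pf : Finset (Set ℝ) := hfin.toFinset with hPf
  have hcc : compCount W = Pf.card := by
    rw [compCount, hPf, Set.ncard_eq_toFinset_card _ hfin]
  have hKprop : ∀ K ∈ Pf, IsPreconnected K ∧ K ⊆ W := by
    intro K hK
    rw [hPf, Set.Finite.mem_toFinset] at hK
    obtain ⟨y, hy, rfl⟩ := hK
    exact ⟨isPreconnected_connectedComponentIn, connectedComponentIn_subset _ _⟩
  have hdecomp : ∀ c : Bool, Cword f (Icc a b) δ (w ++ [c]) =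
      ⋃ K ∈ Pf, (Cword f (Icc a b) δ (w ++ [c]) ∩ K) := by
    intro c
    ext z
    simp only [mem_iUnion, mem_inter_iff, exists_prop]
    constructor
    · intro hz
      have hzW : z ∈ W := Cword_append_subset hz
      refine ⟨connectedComponentIn W z, ?_, hz, mem_connectedComponentIn hzW⟩
      rw [hPf, Set.Finite.mem_toFinset]
      exact ⟨z, hzW, rfl⟩
    · rintro ⟨K, -, hz, -⟩
      exact hz
  constructor
  · have h1 := covers_biUnion (n := p + 1) Pf
      (fun K => Cword f (Icc a b) δ (w ++ [true]) ∩ K)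
      (fun K hK => (component_covers hC1 hmaps hcrit hδ w (hKprop K hK).1 (hKprop K hK).2).1)
    rw [← hdecomp true] at h1
    rw [hcc, Nat.mul_comm]
    exact h1
  · have h2 := covers_biUnion (n := 2 * (p + 1)) Pf
      (fun K => Cword f (Icc a b) δ (w ++ [false]) ∩ K)
      (fun K hK => (component_covers hC1 hmaps hcrit hδ w (hKprop K hK).1 (hKprop K hK).2).2)
    rw [← hdecomp false] at h2
    rw [hcc, Nat.mul_comm]
    exact h2

lemma covers_Cword (hab : a ≤ b) (hC1 : ∀ k, ContDiff ℝ 1 (f k))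
    (hmaps : ∀ k, MapsTo (f k) (Icc a b) (Icc a b))
    (hcrit : ∀ k, (crit f (Icc a b) k).Finite ∧ (crit f (Icc a b) k).ncard ≤ p)
    (hδ : 0 < δ) (w : List Bool) :
    ∃ n, Covers n (Cword f (Icc a b) δ w) := by
  induction w using List.reverseRecOn with
  | nil =>
    refine ⟨1, ?_⟩
    have : Cword f (Icc a b) δ [] = Icc a b := by
      ext x
      simp [Cword]
    rw [this]
    exact covers_of_isPreconnected isPreconnected_Icc
  | append_singleton w c ih =>
    obtain ⟨n, hn⟩ := ih
    have hfin := (covers_compCount hn).1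
    obtain ⟨h1, h2⟩ := step_covers hC1 hmaps hcrit hδ w hfin
    cases c
    · exact ⟨_, h2⟩
    · exact ⟨_, h1⟩

end Main

theorem components_of_extended_word
    (a b : ℝ) (hab : a ≤ b) (f : ℕ → ℝ → ℝ) (p : ℕ)
    (hC1 : ∀ k, ContDiff ℝ 1 (f k))
    (hmaps : ∀ k, MapsTo (f k) (Icc a b) (Icc a b))
    (hcrit : ∀ k, (crit f (Icc a b) k).Finite ∧ (crit f (Icc a b) k).ncard ≤ p)
    (δ : ℝ) (hδ : 0 < δ) (w : List Bool) :
    compCount (Cword f (Icc a b) δ (w ++ [false])) +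
      compCount (Cword f (Icc a b) δ (w ++ [true])) ≤
      3 * (p + 1) * compCount (Cword f (Icc a b) δ w) := by
  obtain ⟨n, hn⟩ := covers_Cword hab hC1 hmaps hcrit hδ w
  have hfin := (covers_compCount hn).1
  obtain ⟨h1, h2⟩ := step_covers hC1 hmaps hcrit hδ w hfin
  have hb1 := (covers_compCount h1).2
  have hb2 := (covers_compCount h2).2
  calc compCount (Cword f (Icc a b) δ (w ++ [false])) +
      compCount (Cword f (Icc a b) δ (w ++ [true]))
      ≤ 2 * (p + 1) * compCount (Cword f (Icc a b) δ w) +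
        (p + 1) * compCount (Cword f (Icc a b) δ w) := Nat.add_le_add hb2 hb1
    _ = 3 * (p + 1) * compCount (Cword f (Icc a b) δ w) := by ring
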